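/- (Solvability of the cohomological equation along a uniformly contracted cocycle) Let X be a Banach space, l ≥ 1, ω ∈ ℝ^l, and let M : ℝ^l → L(X) and E : ℝ^l → X be continuous, bounded and ℤ^l-periodic. Assume there are C_h ≥ 1 and 0 < μ < 1 such that ‖M(θ+(n−1)ω) ∘ ⋯ ∘ M(θ+ω) ∘ M(θ)‖ ≤ C_h·μ^n for all n ≥ 1 and all θ ∈ ℝ^l. Then there exists a unique bounded continuous ℤ^l-periodic map Δ : ℝ^l → X satisfying M(θ)Δ(θ) − Δ(θ+ω) = −E(θ) for all θ, and it satisfies sup_θ ‖Δ(θ)‖ ≤ C_h(1−μ)^{−1} sup_θ ‖E(θ)‖. -/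

import Mathlib

open scoped BigOperators

noncomputable section

/-- The cocycle `M(θ+(n−1)ω) ∘ ⋯ ∘ M(θ+ω) ∘ M(θ)` over the rotation by `ω`. -/
noncomputable def cocycle {l : ℕ} {X : Type*} [NormedAddCommGroup X]
    [NormedSpace ℝ X] (M : (Fin l → ℝ) → X →L[ℝ] X) (ω : Fin l → ℝ) :
    ℕ → (Fin l → ℝ) → X →L[ℝ] X
  | 0, _ => 1
  | n + 1, θ => (M (θ + n • ω)).comp (cocycle M ω n θ)

section Aux

variable {l : ℕ} {X : Type*} [NormedAddCommGroup X] [NormedSpace ℝ X]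
  (M : (Fin l → ℝ) → X →L[ℝ] X) (ω : Fin l → ℝ)

lemma cocycle_cont (hMcont : Continuous M) (n : ℕ) :
    Continuous fun θ => cocycle M ω n θ := by
  induction n with
  | zero => simpa [cocycle] using continuous_const
  | succ n ih =>
      show Continuous fun θ => (M (θ + n • ω)).comp (cocycle M ω n θ)
      exact (hMcont.comp (continuous_id.add continuous_const)).clm_comp ih

lemma cocycle_per
    (hMper : ∀ (θ : Fin l → ℝ) (k : Fin l → ℤ), M (θ + fun s => (k s : ℝ)) = M θ)
    (n : ℕ) (θ : Fin l → ℝ) (k : Fin l → ℤ) :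
    cocycle M ω n (θ + fun s => (k s : ℝ)) = cocycle M ω n θ := by
  induction n with
  | zero => rfl
  | succ n ih =>
      show (M ((θ + fun s => (k s : ℝ)) + n • ω)).comp
          (cocycle M ω n (θ + fun s => (k s : ℝ)))
        = (M (θ + n • ω)).comp (cocycle M ω n θ)
      rw [add_right_comm θ (fun s => (k s : ℝ)) (n • ω), hMper, ih]

lemma cocycle_succ_apply (n : ℕ) (θ : Fin l → ℝ) (x : X) :
    cocycle M ω (n + 1) θ x = M (θ + n • ω) (cocycle M ω n θ x) := rfl

end Aux

/-- Solvability of the cohomological equation along a uniformly contracted cocycle: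
if `‖M(θ+(n−1)ω)⋯M(θ)‖ ≤ C_h μⁿ` with `0 < μ < 1`, then
`M(θ)Δ(θ) − Δ(θ+ω) = −E(θ)` has a unique bounded continuous periodic solution `Δ`,
with `sup‖Δ‖ ≤ C_h (1−μ)⁻¹ sup‖E‖`. -/
theorem statement16 {l : ℕ} (hl : 1 ≤ l) {X : Type*} [NormedAddCommGroup X]
    [NormedSpace ℝ X] [CompleteSpace X]
    (ω : Fin l → ℝ) (M : (Fin l → ℝ) → X →L[ℝ] X) (E : (Fin l → ℝ) → X)
    (hMcont : Continuous M) (hEcont : Continuous E)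
    (hMbd : ∃ b : ℝ, ∀ θ, ‖M θ‖ ≤ b)
    (hMper : ∀ (θ : Fin l → ℝ) (k : Fin l → ℤ), M (θ + fun s => (k s : ℝ)) = M θ)
    (hEper : ∀ (θ : Fin l → ℝ) (k : Fin l → ℤ), E (θ + fun s => (k s : ℝ)) = E θ)
    (Ch μ CE : ℝ) (hCh : 1 ≤ Ch) (hμ0 : 0 < μ) (hμ1 : μ < 1)
    (hco : ∀ n : ℕ, 1 ≤ n → ∀ θ, ‖cocycle M ω n θ‖ ≤ Ch * μ ^ n)
    (hCE : ∀ θ, ‖E θ‖ ≤ CE) :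
    ∃ Δ : (Fin l → ℝ) → X,
      (Continuous Δ ∧
        (∀ (θ : Fin l → ℝ) (k : Fin l → ℤ), Δ (θ + fun s => (k s : ℝ)) = Δ θ) ∧
        (∃ b : ℝ, ∀ θ, ‖Δ θ‖ ≤ b) ∧
        (∀ θ, M θ (Δ θ) - Δ (θ + ω) = - E θ)) ∧
      (∀ θ, ‖Δ θ‖ ≤ Ch * (1 - μ)⁻¹ * CE) ∧
      (∀ Δ' : (Fin l → ℝ) → X,
        Continuous Δ' →
        (∀ (θ : Fin l → ℝ) (k : Fin l → ℤ), Δ' (θ + fun s => (k s : ℝ)) = Δ' θ) →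
        (∃ b : ℝ, ∀ θ, ‖Δ' θ‖ ≤ b) →
        (∀ θ, M θ (Δ' θ) - Δ' (θ + ω) = - E θ) →
        Δ' = Δ) := by
  classical
  have hCE0 : 0 ≤ CE := le_trans (norm_nonneg _) (hCE 0)
  have hμnn : 0 ≤ μ := hμ0.le
  have hco' : ∀ (n : ℕ) θ, ‖cocycle M ω n θ‖ ≤ Ch * μ ^ n := by
    intro n θ
    cases n with
    | zero =>
        show ‖(1 : X →L[ℝ] X)‖ ≤ Ch * μ ^ 0
        rw [pow_zero, mul_one]
        exact le_trans (ContinuousLinearMap.norm_id_le : ‖(1 : X →L[ℝ] X)‖ ≤ 1) hCh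
    | succ n => exact hco _ (Nat.succ_le_succ (Nat.zero_le _)) θ
  -- the candidate solution
  set g : (Fin l → ℝ) → ℕ → X := fun θ n =>
    cocycle M ω n (θ - n • ω) (E (θ - (n + 1) • ω)) with hgdef
  have hgnorm : ∀ θ n, ‖g θ n‖ ≤ Ch * μ ^ n * CE := by
    intro θ n
    calc ‖g θ n‖ ≤ ‖cocycle M ω n (θ - n • ω)‖ * ‖E (θ - (n + 1) • ω)‖ :=
          (cocycle M ω n (θ - n • ω)).le_opNorm _
      _ ≤ Ch * μ ^ n * CE := by
          exact mul_le_mul (hco' n _) (hCE _) (norm_nonneg _)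
            (by positivity)
  have hsummaj : Summable fun n : ℕ => Ch * μ ^ n * CE := by
    have : Summable fun n : ℕ => μ ^ n := summable_geometric_of_lt_one hμnn hμ1
    exact (this.mul_left Ch).mul_right CE
  have hsum : ∀ θ, Summable (g θ) := fun θ =>
    Summable.of_norm_bounded hsummaj (hgnorm θ)
  set Δ : (Fin l → ℝ) → X := fun θ => ∑' n, g θ n with hΔdef
  -- norm bound
  have hbound : ∀ θ, ‖Δ θ‖ ≤ Ch * (1 - μ)⁻¹ * CE := by
    intro θ
    have h1 : Summable fun n => ‖g θ n‖ :=
      Summable.of_nonneg_of_le (fun n => norm_nonneg _) (hgnorm θ) hsummaj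
    have h2 : ‖Δ θ‖ ≤ ∑' n, ‖g θ n‖ := norm_tsum_le_tsum_norm h1
    have h3 : ∑' n, ‖g θ n‖ ≤ ∑' n, Ch * μ ^ n * CE :=
      Summable.tsum_le_tsum (hgnorm θ) h1 hsummaj
    have h4 : ∑' n : ℕ, Ch * μ ^ n * CE = Ch * (1 - μ)⁻¹ * CE := by
      have : (fun n : ℕ => Ch * μ ^ n * CE) = fun n : ℕ => (Ch * CE) * μ ^ n := by
        funext n; ring
      rw [this, tsum_mul_left, tsum_geometric_of_lt_one hμnn hμ1]; ring
    linarith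
  -- continuity
  have hΔcont : Continuous Δ := by
    apply continuous_tsum ?_ hsummaj (fun n θ => hgnorm θ n)
    intro n
    exact ((cocycle_cont M ω hMcont n).comp
        (continuous_id.sub continuous_const)).clm_apply
      (hEcont.comp (continuous_id.sub continuous_const))
  -- periodicity
  have hΔper : ∀ (θ : Fin l → ℝ) (k : Fin l → ℤ),
      Δ (θ + fun s => (k s : ℝ)) = Δ θ := by
    intro θ k
    have : g (θ + fun s => (k s : ℝ)) = g θ := by
      funext n
      simp only [hgdef]
      rw [add_sub_right_comm θ (fun s => (k s : ℝ)) (n • ω),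
        add_sub_right_comm θ (fun s => (k s : ℝ)) ((n + 1) • ω),
        cocycle_per M ω hMper, hEper]
    simp only [hΔdef, this]
  -- the functional equation
  have hΔeq : ∀ θ, M θ (Δ θ) - Δ (θ + ω) = - E θ := by
    intro θ
    have hshift : ∀ n, g (θ + ω) (n + 1) = M θ (g θ n) := by
      intro n
      have e1 : θ + ω - (n + 1) • ω = θ - n • ω := by
        rw [succ_nsmul]; abel
      have e2 : θ + ω - (n + 1 + 1) • ω = θ - (n + 1) • ω := by
        rw [succ_nsmul ω (n + 1)]; abel
      simp only [hgdef, e1, e2]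
      rw [cocycle_succ_apply, sub_add_cancel]
    have h0 : g (θ + ω) 0 = E θ := by
      simp only [hgdef]
      show E (θ + ω - 1 • ω) = E θ
      rw [one_smul, add_sub_cancel_right]
    have hsplit : Δ (θ + ω) = E θ + M θ (Δ θ) := by
      have := Summable.tsum_eq_zero_add (hsum (θ + ω))
      simp only [hΔdef] at this ⊢
      rw [this, h0]
      congr 1
      simp only [hshift]
      exact ((M θ).map_tsum (hsum θ)).symm
    rw [hsplit]; abel
  refine ⟨Δ, ⟨hΔcont, hΔper, ⟨Ch * (1 - μ)⁻¹ * CE, hbound⟩, hΔeq⟩, hbound, ?_⟩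
  -- uniqueness
  rintro Δ' hc' hp' ⟨b', hb'⟩ heq'
  have hD : ∀ θ, Δ' (θ + ω) - Δ (θ + ω) = M θ (Δ' θ - Δ θ) := by
    intro θ
    have h : M θ (Δ' θ) - Δ' (θ + ω) = M θ (Δ θ) - Δ (θ + ω) := by
      rw [heq' θ, hΔeq θ]
    have h2 := sub_eq_sub_iff_sub_eq_sub.mp h
    rw [map_sub]
    exact h2.symm
  have key : ∀ (n : ℕ) θ, Δ' (θ + n • ω) - Δ (θ + n • ω)
      = cocycle M ω n θ (Δ' θ - Δ θ) := by
    intro n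
    induction n with
    | zero => intro θ; simp [cocycle]
    | succ n ih =>
        intro θ
        have e : θ + (n + 1) • ω = (θ + n • ω) + ω := by
          rw [succ_nsmul]; abel
        rw [e, hD (θ + n • ω), ih θ, cocycle_succ_apply]
  funext θ
  set B := b' + Ch * (1 - μ)⁻¹ * CE with hB
  have hnorm : ∀ n : ℕ, ‖Δ' θ - Δ θ‖ ≤ Ch * μ ^ n * B := by
    intro n
    have e : (θ - n • ω) + n • ω = θ := sub_add_cancel θ (n • ω)
    have := key n (θ - n • ω)
    rw [e] at this
    calc ‖Δ' θ - Δ θ‖ = ‖cocycle M ω n (θ - n • ω) (Δ' (θ - n • ω) - Δ (θ - n • ω))‖ := by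
          rw [this]
      _ ≤ ‖cocycle M ω n (θ - n • ω)‖ * ‖Δ' (θ - n • ω) - Δ (θ - n • ω)‖ :=
          ContinuousLinearMap.le_opNorm _ _
      _ ≤ Ch * μ ^ n * B := by
          apply mul_le_mul (hco' n _) ?_ (norm_nonneg _) (by positivity)
          calc ‖Δ' (θ - n • ω) - Δ (θ - n • ω)‖
              ≤ ‖Δ' (θ - n • ω)‖ + ‖Δ (θ - n • ω)‖ := norm_sub_le _ _
            _ ≤ B := add_le_add (hb' _) (hbound _)
  have htend : Filter.Tendsto (fun n : ℕ => Ch * μ ^ n * B) Filter.atTop (nhds 0) := by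
    have h := tendsto_pow_atTop_nhds_zero_of_lt_one hμnn hμ1
    have := (h.const_mul Ch).mul_const B
    simpa using this
  have hle : ‖Δ' θ - Δ θ‖ ≤ 0 :=
    ge_of_tendsto' htend fun n => hnorm n
  have : Δ' θ - Δ θ = 0 := by
    rw [← norm_le_zero_iff]; exact hle
  exact sub_eq_zero.mp this
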